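/- Let λ ≥ 0, α ∈ (0,1), and consider the bilinear form a_λ(u,φ) = (₀∂_t^α u, φ)_{L²(0,T)} + λ(u,φ)_{L²(0,T)} on H̃_L^α(0,T) × L²(0,T). Assuming (₀∂_t^α v, v)_{L²(0,T)} ≥ 0 for all v ∈ H̃_L^α(0,T), then for every v ∈ H̃_L^α(0,T): ‖₀∂_t^α v‖_{L²(0,T)} + λ‖v‖_{L²(0,T)} ≤ 2 sup_{φ ∈ L²(0,T), φ≠0} a_λ(v,φ)/‖φ‖_{L²(0,T)}. -/

import Mathlib

open MeasureTheory Set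

/-- Left-sided Riemann–Liouville fractional integral of order `γ`. -/
noncomputable def RLint (γ : ℝ) (u : ℝ → ℝ) (t : ℝ) : ℝ :=
  (Real.Gamma γ)⁻¹ * ∫ s in (0:ℝ)..t, (t - s) ^ (γ - 1) * u s

/-- Left Riemann–Liouville fractional derivative `₀∂_t^α v = d/dt (₀I^{1-α} v)`. -/
noncomputable def RLd (α : ℝ) (v : ℝ → ℝ) : ℝ → ℝ :=
  deriv (RLint (1 - α) v)

/-- The `L²(0,T)` norm. -/
noncomputable def l2 (T : ℝ) (f : ℝ → ℝ) : ℝ :=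
  (∫ t in Set.Ioc (0:ℝ) T, f t ^ 2) ^ ((1:ℝ)/2)

/-- The bilinear form `a_λ(v,φ) = (₀∂_t^α v, φ)_{L²(0,T)} + λ (v,φ)_{L²(0,T)}`. -/
noncomputable def aForm (T lam α : ℝ) (v φ : ℝ → ℝ) : ℝ :=
  (∫ t in Set.Ioc (0:ℝ) T, RLd α v t * φ t) + lam * ∫ t in Set.Ioc (0:ℝ) T, v t * φ t

/-- Membership in `H^α(ℝ)` via the Fourier transform. -/
def MemHalpha (α : ℝ) (w : ℝ → ℝ) : Prop :=
  MemLp w 2 (volume : Measure ℝ) ∧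
  Integrable (fun ξ : ℝ =>
    (1 + ξ ^ 2) ^ α * ‖VectorFourier.fourierIntegral Real.fourierChar (volume : Measure ℝ) (innerₗ ℝ) (fun t => (w t : ℂ)) ξ‖ ^ 2)

/-- `v ∈ H̃_L^α(0,T)`: extension by zero to `t ≤ 0` lies in `H^α(-∞,T)`. -/
def TildeHL (α T : ℝ) (v : ℝ → ℝ) : Prop :=
  ∃ w : ℝ → ℝ, MemHalpha α w ∧ (∀ t ∈ Set.Ioo (0:ℝ) T, w t = v t) ∧ ∀ t ≤ (0:ℝ), w t = 0

lemma l2_nonneg (T : ℝ) (f : ℝ → ℝ) : 0 ≤ l2 T f := by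
  unfold l2; positivity

lemma l2_sq (T : ℝ) (f : ℝ → ℝ) : (l2 T f) ^ 2 = ∫ t in Set.Ioc (0:ℝ) T, f t ^ 2 := by
  unfold l2
  rw [← Real.sqrt_eq_rpow, Real.sq_sqrt (integral_nonneg fun t => sq_nonneg _)]

lemma l2_eq_zero (T : ℝ) (f : ℝ → ℝ)
    (hInt : Integrable (fun t => f t ^ 2) (volume.restrict (Set.Ioc 0 T)))
    (h : l2 T f = 0) : f =ᵐ[volume.restrict (Set.Ioc 0 T)] 0 := by
  have h0 : ∫ t in Set.Ioc (0:ℝ) T, f t ^ 2 = 0 := by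
    have := l2_sq T f
    rw [h] at this; simpa using this.symm
  have := (integral_eq_zero_iff_of_nonneg (fun t => sq_nonneg (f t)) hInt).mp h0
  filter_upwards [this] with t ht
  simpa using pow_eq_zero_iff (n := 2) (by norm_num) |>.mp ht

lemma int_mul_of_L2 {μ : Measure ℝ} {f g : ℝ → ℝ} (hf : MemLp f 2 μ) (hg : MemLp g 2 μ) :
    Integrable (fun t => f t * g t) μ := by
  have : MemLp (f • g) 1 μ := hg.smul hf
  exact memLp_one_iff_integrable.mp this

/-- Inf-sup inequality for the fractional ODE bilinear form `a_λ`: assuming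
nonnegativity of `(₀∂_t^α v, v)`, every `v ∈ H̃_L^α(0,T)` satisfies
`‖₀∂_t^α v‖ + λ‖v‖ ≤ 2 sup_{φ ≠ 0} a_λ(v,φ)/‖φ‖`. -/
theorem stmt11 (T lam α : ℝ) (hT : 0 < T) (hlam : 0 ≤ lam) (hα : α ∈ Set.Ioo (0:ℝ) 1)
    (hpos : ∀ w : ℝ → ℝ, TildeHL α T w →
      0 ≤ ∫ t in Set.Ioc (0:ℝ) T, RLd α w t * w t)
    (v : ℝ → ℝ) (hv : TildeHL α T v)
    (hvL2 : MemLp v 2 (volume.restrict (Set.Ioc 0 T)))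
    (hdL2 : MemLp (RLd α v) 2 (volume.restrict (Set.Ioc 0 T))) :
    ∃ φ : ℝ → ℝ, MemLp φ 2 (volume.restrict (Set.Ioc 0 T)) ∧ l2 T φ ≠ 0 ∧
      l2 T (RLd α v) + lam * l2 T v ≤ 2 * (aForm T lam α v φ / l2 T φ) := by
  have hdd : Integrable (fun t => RLd α v t ^ 2) (volume.restrict (Set.Ioc 0 T)) := by
    simpa [sq] using int_mul_of_L2 hdL2 hdL2
  have hvv : Integrable (fun t => v t ^ 2) (volume.restrict (Set.Ioc 0 T)) := by
    simpa [sq] using int_mul_of_L2 hvL2 hvL2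
  have hdv : Integrable (fun t => RLd α v t * v t) (volume.restrict (Set.Ioc 0 T)) :=
    int_mul_of_L2 hdL2 hvL2
  by_cases hdeg : l2 T (RLd α v) = 0 ∧ lam * l2 T v = 0
  · -- degenerate case: both norms vanish; take φ ≡ 1
    obtain ⟨h1, h2⟩ := hdeg
    refine ⟨fun _ => 1, memLp_const 1, ?_, ?_⟩
    · have : l2 T (fun _ => (1:ℝ)) = T ^ ((1:ℝ)/2) := by
        unfold l2
        simp [Real.volume_Ioc, ENNReal.toReal_ofReal hT.le, max_eq_left hT.le]
      rw [this]
      positivity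
    · have hd0 : RLd α v =ᵐ[volume.restrict (Set.Ioc 0 T)] 0 := l2_eq_zero T _ hdd h1
      have e1 : ∫ t in Set.Ioc (0:ℝ) T, RLd α v t * (1:ℝ) = 0 := by
        rw [integral_congr_ae (g := fun _ => (0:ℝ))
          (by filter_upwards [hd0] with t ht; simp [ht])]
        simp
      have e2 : lam * ∫ t in Set.Ioc (0:ℝ) T, v t * (1:ℝ) = 0 := by
        rcases mul_eq_zero.mp h2 with hl | hl
        · simp [hl]
        · have hv0 : v =ᵐ[volume.restrict (Set.Ioc 0 T)] 0 := l2_eq_zero T _ hvv hl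
          have h3 : ∫ t in Set.Ioc (0:ℝ) T, v t * (1:ℝ) = 0 := by
            rw [integral_congr_ae (g := fun _ => (0:ℝ))
              (by filter_upwards [hv0] with t ht; simp [ht])]
            simp
          rw [h3, mul_zero]
      have haf : aForm T lam α v (fun _ => 1) = 0 := by
        simp only [aForm]
        rw [e1, e2, zero_add]
      rw [haf, h1, h2]
      simp
  · -- non-degenerate case: take φ = ∂v + λ v
    set d := RLd α v with hd
    set φ : ℝ → ℝ := fun t => d t + lam * v t with hφ
    have hφL2 : MemLp φ 2 (volume.restrict (Set.Ioc 0 T)) := hdL2.add (hvL2.const_mul lam)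
    set A := ∫ t in Set.Ioc (0:ℝ) T, d t ^ 2 with hA
    set B := ∫ t in Set.Ioc (0:ℝ) T, v t ^ 2 with hB
    set P := ∫ t in Set.Ioc (0:ℝ) T, d t * v t with hP
    have hPnn : 0 ≤ P := hpos v hv
    have I1 : ∫ t in Set.Ioc (0:ℝ) T, d t * φ t = A + lam * P := by
      rw [integral_congr_ae (g := fun t => d t ^ 2 + lam * (d t * v t))
        (Filter.Eventually.of_forall fun t => by simp only [hφ]; ring)]
      rw [integral_add hdd (hdv.const_mul lam), integral_const_mul lam]
    have I2 : ∫ t in Set.Ioc (0:ℝ) T, v t * φ t = P + lam * B := by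
      rw [integral_congr_ae (g := fun t => d t * v t + lam * (v t ^ 2))
        (Filter.Eventually.of_forall fun t => by simp only [hφ]; ring)]
      rw [integral_add hdv (hvv.const_mul lam), integral_const_mul lam]
    have Iφ : ∫ t in Set.Ioc (0:ℝ) T, φ t ^ 2 = A + 2 * lam * P + lam ^ 2 * B := by
      have hsum1 : Integrable (fun t => d t ^ 2 + 2 * lam * (d t * v t))
          (volume.restrict (Set.Ioc 0 T)) := hdd.add (hdv.const_mul (2 * lam))
      rw [integral_congr_ae
        (g := fun t => (d t ^ 2 + 2 * lam * (d t * v t)) + lam ^ 2 * (v t ^ 2))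
        (Filter.Eventually.of_forall fun t => by simp only [hφ]; ring)]
      rw [integral_add hsum1 (hvv.const_mul (lam ^ 2)),
        integral_add hdd (hdv.const_mul (2 * lam)), integral_const_mul (2 * lam),
        integral_const_mul (lam ^ 2)]
    have haF : aForm T lam α v φ = A + 2 * lam * P + lam ^ 2 * B := by
      simp only [aForm, ← hd, I1, I2]
      ring
    have hc2 : (l2 T φ) ^ 2 = A + 2 * lam * P + lam ^ 2 * B := by rw [l2_sq, Iφ]
    have ha2 : (l2 T d) ^ 2 = A := l2_sq T d
    have hb2 : (l2 T v) ^ 2 = B := l2_sq T v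
    have hann : 0 ≤ l2 T d := l2_nonneg T d
    have hbnn : 0 ≤ lam * l2 T v := mul_nonneg hlam (l2_nonneg T v)
    have hcnn : 0 ≤ l2 T φ := l2_nonneg T φ
    have hsum : 0 < l2 T d + lam * l2 T v := by
      rcases not_and_or.mp hdeg with h | h
      · have := lt_of_le_of_ne hann (Ne.symm h); linarith
      · have := lt_of_le_of_ne hbnn (Ne.symm h); linarith
    have hcpos : 0 < l2 T φ := by
      rcases lt_or_eq_of_le hcnn with h | h
      · exact h
      · exfalso
        have hc0 : A + 2 * lam * P + lam ^ 2 * B = 0 := by rw [← hc2, ← h]; ring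
        nlinarith [sq_nonneg (l2 T d - lam * l2 T v), mul_nonneg hlam hPnn,
          sq_nonneg (l2 T d + lam * l2 T v), mul_nonneg hann (l2_nonneg T v)]
    refine ⟨φ, hφL2, ne_of_gt hcpos, ?_⟩
    have hform : aForm T lam α v φ = (l2 T φ) ^ 2 := by rw [haF, hc2]
    rw [hform, pow_two, mul_div_assoc, div_self (ne_of_gt hcpos), mul_one]
    nlinarith [sq_nonneg (l2 T d - lam * l2 T v), mul_nonneg hlam hPnn,
      mul_pos hcpos hcpos]
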